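/- Let A and B be skew shapes and fix l ≥ 1. Then cols_l(A) ⊴ cols_l(B) in the dominance order if and only if rects_{k,l}(A) ≤ rects_{k,l}(B) for all k ≥ 1. -/

import Mathlib

open Finset

/-- The weakly decreasing rearrangement of a finite sequence (list) of natural numbers,
i.e. the partition obtained by sorting its parts into weakly decreasing order. -/
def sortDesc (l : List ℕ) : List ℕ := l.mergeSort (fun a b => b ≤ a)

/-- The (extended) dominance order on partitions, represented as weakly decreasing lists
of natural numbers (parts beyond the length of the list are taken to be `0`):
`Dom a b` means `a ⊴ b`, i.e. `a₁ + ⋯ + a_k ≤ b₁ + ⋯ + b_k` for all `k`. -/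
def Dom (a b : List ℕ) : Prop := ∀ k : ℕ, (a.take k).sum ≤ (b.take k).sum

/-- The conjugate (transpose) of a partition given as a list of natural numbers:
the `j`-th entry (0-indexed) is the number of parts that are `> j`. -/
def conj (l : List ℕ) : List ℕ :=
  (List.range (l.foldr max 0)).map (fun j => (l.filter (fun x => j < x)).length)

/-- A skew shape `λ/μ`: a pair of Young diagrams `μ ⊆ λ`. -/
structure SkewShape where
  outer : YoungDiagram
  inner : YoungDiagram
  le : inner ≤ outer

namespace SkewShape

/-- The cells (boxes) of a skew shape: boxes of the outer diagram not in the inner one. -/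
def cells (A : SkewShape) : Finset (ℕ × ℕ) := A.outer.cells \ A.inner.cells

/-- The number of rows of (the outer shape of) a skew shape. -/
def numRows (A : SkewShape) : ℕ := A.outer.colLen 0

/-- The number of columns of (the outer shape of) a skew shape. -/
def numCols (A : SkewShape) : ℕ := A.outer.rowLen 0

/-- `A.overlap k i` is the number of columns occupied in common by the `k` consecutive
rows `i, i+1, …, i+k-1` of the skew shape `A` (rows indexed from 0). -/
def overlap (A : SkewShape) (k i : ℕ) : ℕ :=
  ((Finset.range A.numCols).filter (fun j => ∀ t, t < k → (i + t, j) ∈ A.cells)).card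

/-- `rows_k(A)`: the weakly decreasing rearrangement of the row-overlap numbers
`(overlap k 0, overlap k 1, …)`; zero parts are discarded (a partition is identified
with its zero-padded versions).  `A.rowsK 1` is the partition of row lengths of `A`. -/
def rowsK (A : SkewShape) (k : ℕ) : List ℕ :=
  sortDesc (((List.range (A.numRows + 1 - k)).map (A.overlap k)).filter (fun x => 0 < x))

/-- The transpose (conjugate) of a skew shape. -/
def transpose (A : SkewShape) : SkewShape :=
  ⟨A.outer.transpose, A.inner.transpose, YoungDiagram.transpose_mono A.le⟩

/-- `cols_l(A)`: the weakly decreasing rearrangement of the column-overlap numbers of `A`;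
`A.colsK 1` is the partition of column lengths of `A`. -/
def colsK (A : SkewShape) (l : ℕ) : List ℕ := A.transpose.rowsK l

/-- `rects k l A` is the number of `k × l` rectangular subdiagrams (contiguous `k × l`
blocks of boxes) contained inside the skew shape `A`, recorded by the position of
their top-left corner. -/
def rects (A : SkewShape) (k l : ℕ) : ℕ :=
  (((Finset.range A.numRows) ×ˢ (Finset.range A.numCols)).filter
    (fun p => ∀ t, t < k → ∀ u, u < l → (p.1 + t, p.2 + u) ∈ A.cells)).card

end SkewShape

/-- A semistandard Young tableau of skew shape `A`: a filling of the boxes of `A`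
with positive integers, weakly increasing along rows and strictly increasing down
columns (entries outside `A` are recorded as `0`). -/
structure SkewSsyt (A : SkewShape) where
  entry : ℕ → ℕ → ℕ
  pos : ∀ i j, (i, j) ∈ A.cells → 1 ≤ entry i j
  zeros : ∀ i j, (i, j) ∉ A.cells → entry i j = 0
  row_weak : ∀ i j1 j2, j1 ≤ j2 → (i, j1) ∈ A.cells → (i, j2) ∈ A.cells →
      entry i j1 ≤ entry i j2
  col_strict : ∀ i1 i2 j, i1 < i2 → (i1, j) ∈ A.cells → (i2, j) ∈ A.cells →
      entry i1 j < entry i2 j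

/-- The number of boxes of `T` filled with the entry `v`. -/
def contentCount {A : SkewShape} (T : SkewSsyt A) (v : ℕ) : ℕ :=
  (A.cells.filter (fun c => T.entry c.1 c.2 = v)).card

/-- `T` has content `ν` (a partition written as a list, 0-indexed: `ν.getD v 0` is the
`(v+1)`-st part): the number of entries equal to `v + 1` is the `(v+1)`-st part of `ν`. -/
def HasContent {A : SkewShape} (T : SkewSsyt A) (ν : List ℕ) : Prop :=
  ∀ v : ℕ, contentCount T (v + 1) = ν.getD v 0

/-- `readBefore c c'` : the box `c` comes strictly before the box `c'` in the reverse
reading order (rows top to bottom, each row read right to left). -/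
def readBefore (c c' : ℕ × ℕ) : Prop := c.1 < c'.1 ∨ (c.1 = c'.1 ∧ c'.2 < c.2)

instance (c c' : ℕ × ℕ) : Decidable (readBefore c c') := by
  unfold readBefore; infer_instance

/-- `T` is a Littlewood–Richardson filling: its reverse reading word is a lattice word,
i.e. at every box `c` carrying an entry `v + 2`, the number of occurrences of `v + 2`
read so far (weakly up to `c`) is at most the number of occurrences of `v + 1` read
strictly before `c`. -/
def IsLR {A : SkewShape} (T : SkewSsyt A) : Prop :=
  ∀ c ∈ A.cells, ∀ v : ℕ, T.entry c.1 c.2 = v + 2 →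
    (A.cells.filter (fun c' => T.entry c'.1 c'.2 = v + 2 ∧ (readBefore c' c ∨ c' = c))).card ≤
    (A.cells.filter (fun c' => T.entry c'.1 c'.2 = v + 1 ∧ readBefore c' c)).card

/-- The support of the skew Schur function `s_A`: by the Littlewood–Richardson rule,
the set of partitions `ν` (weakly decreasing lists) admitting an LR filling of `A`
of content `ν`, i.e. those `ν` with `s_ν` appearing with nonzero coefficient in `s_A`. -/
def SkewShape.support (A : SkewShape) : Set (List ℕ) :=
  { ν | ν.Pairwise (· ≥ ·) ∧ ∃ T : SkewSsyt A, IsLR T ∧ HasContent T ν }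

/-- The coefficient of the Schur function `s_ν` in the Schur expansion of `s_A`:
by the Littlewood–Richardson rule, the number of LR fillings of `A` of content `ν`. -/
noncomputable def lrCoeff (A : SkewShape) (ν : List ℕ) : ℕ :=
  Nat.card { T : SkewSsyt A // IsLR T ∧ HasContent T ν }

/-- `s_A − s_B` is Schur-positive: every coefficient in the Schur expansion of the
difference is nonnegative, i.e. (by the LR rule) each LR coefficient of `B` is at most
the corresponding one of `A`. -/
def SchurPositiveDiff (A B : SkewShape) : Prop :=
  ∀ ν : List ℕ, ν.Pairwise (· ≥ ·) → lrCoeff B ν ≤ lrCoeff A ν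

/-- The skew Schur function `s_A = Σ_T x^T`, as a formal power series in the variables
`x_0, x_1, x_2, …` (variable `x_v` recording entries equal to `v + 1`): the coefficient
of the monomial with exponents `d` is the number of SSYT of shape `A` and content `d`. -/
noncomputable def skewSchur (A : SkewShape) : MvPowerSeries ℕ ℤ :=
  fun d => (Nat.card { T : SkewSsyt A // ∀ v : ℕ, contentCount T (v + 1) = d v } : ℤ)

/-- The boxes remaining after deleting the top box of every non-empty column of `A`:
a box survives iff there is a box of `A` directly above it. -/
def trimCells (A : SkewShape) : Finset (ℕ × ℕ) :=
  A.cells.filter (fun c => 1 ≤ c.1 ∧ (c.1 - 1, c.2) ∈ A.cells)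

/-- The set of boxes of the skew shape `A ∗ B`, obtained by positioning `B` immediately
below and to the left of `A` so that `A` and `B` share no common row or column. -/
def starCells (A B : SkewShape) : Finset (ℕ × ℕ) :=
  A.cells.image (fun c => (c.1, c.2 + B.numCols)) ∪
    B.cells.image (fun c => (c.1 + A.numRows, c.2))

/-- The straight shape (partition) `μ`, viewed as the skew shape `μ/(0)`. -/
def ofYD (μ : YoungDiagram) : SkewShape := ⟨μ, ⊥, bot_le⟩

/-- The list of parts `(μ_k, μ_{k+1}, …, μ_l)` (1-indexed) of a partition `μ` given as a
Young diagram, parts beyond the length of `μ` being `0`. -/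
def tailParts (μ : YoungDiagram) (k l : ℕ) : List ℕ :=
  (List.range (l + 1 - k)).map (fun t => μ.rowLen (k - 1 + t))


section AuxProofs

lemma sortDesc_perm (l : List ℕ) : (sortDesc l).Perm l := List.mergeSort_perm l _

lemma sortDesc_sorted (l : List ℕ) : (sortDesc l).Pairwise (· ≥ ·) := by
  have h := List.pairwise_mergeSort (le := fun a b : ℕ => decide (b ≤ a))
    (by intro a b c h1 h2; simp at *; omega) (by intro a b; simp; omega) l
  exact h.imp (by simp)

lemma sum_take_le (t : List ℕ) (K m : ℕ) :
    (t.take K).sum ≤ (t.map (· - m)).sum + K * m := by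
  induction t generalizing K with
  | nil => simp
  | cons x t ih =>
    cases K with
    | zero => simp
    | succ K =>
      simp only [List.take_succ_cons, List.sum_cons, List.map_cons]
      have h1 := ih K
      have h2 : (K + 1) * m = K * m + m := by ring
      omega

lemma exists_K (a : List ℕ) (m : ℕ) (ha : a.Pairwise (· ≥ ·)) :
    ∃ K, (a.map (· - m)).sum + K * m = (a.take K).sum := by
  induction a with
  | nil => exact ⟨0, by simp⟩
  | cons x t ih =>
    have ht : t.Pairwise (· ≥ ·) := ha.of_cons
    by_cases hx : m < x
    · obtain ⟨K, hK⟩ := ih ht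
      refine ⟨K + 1, ?_⟩
      simp only [List.map_cons, List.sum_cons, List.take_succ_cons]
      have h2 : (K + 1) * m = K * m + m := by ring
      omega
    · refine ⟨0, ?_⟩
      have h0 : ((x :: t).map (· - m)).sum = 0 := by
        apply List.sum_eq_zero
        intro y hy
        simp only [List.map_cons, List.mem_cons, List.mem_map] at hy
        rcases hy with rfl | ⟨z, hz, rfl⟩
        · omega
        · have := List.rel_of_pairwise_cons ha (a' := z) hz
          omega
      simpa using h0

lemma exists_m (b : List ℕ) (K : ℕ) (hb : b.Pairwise (· ≥ ·)) :
    (b.map (· - b.getD K 0)).sum + (K + 1) * (b.getD K 0) ≤ (b.take (K + 1)).sum := by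
  induction b generalizing K with
  | nil => simp
  | cons x t ih =>
    have ht : t.Pairwise (· ≥ ·) := hb.of_cons
    cases K with
    | zero =>
      simp only [List.getD_cons_zero, List.map_cons, List.sum_cons, List.take_succ_cons,
        List.take_zero, List.sum_nil]
      have h0 : (t.map (· - x)).sum = 0 := by
        apply List.sum_eq_zero
        intro y hy
        simp only [List.mem_map] at hy
        obtain ⟨z, hz, rfl⟩ := hy
        have := List.rel_of_pairwise_cons hb (a' := z) hz
        omega
      omega
    | succ K =>
      simp only [List.getD_cons_succ, List.map_cons, List.sum_cons, List.take_succ_cons]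
      have hK := ih K ht
      have hm : t.getD K 0 ≤ x := by
        by_cases h : K < t.length
        · rw [List.getD_eq_getElem _ _ h]
          exact List.rel_of_pairwise_cons hb (List.getElem_mem h)
        · rw [List.getD_eq_default _ _ (le_of_not_gt h)]
          omega
      have h2 : (K + 1 + 1) * (t.getD K 0) = (K + 1) * (t.getD K 0) + t.getD K 0 := by ring
      omega

lemma map_shift (l : List ℕ) (m : ℕ) :
    (l.map (fun x => x + 1 - (m + 1))).sum = (l.map (· - m)).sum := by
  congr 1
  apply List.map_congr_left
  intro x _
  omega

lemma dom_forward {a b : List ℕ} (ha : a.Pairwise (· ≥ ·)) (hd : Dom a b) {k : ℕ} (hk : 1 ≤ k) :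
    (a.map (fun x => x + 1 - k)).sum ≤ (b.map (fun x => x + 1 - k)).sum := by
  obtain ⟨m, rfl⟩ : ∃ m, k = m + 1 := ⟨k - 1, by omega⟩
  rw [map_shift, map_shift]
  obtain ⟨K, hK⟩ := exists_K a m ha
  have h1 := hd K
  have h2 := sum_take_le b K m
  omega

lemma dom_backward {a b : List ℕ} (hb : b.Pairwise (· ≥ ·))
    (h : ∀ k, 1 ≤ k → (a.map (fun x => x + 1 - k)).sum ≤ (b.map (fun x => x + 1 - k)).sum) :
    Dom a b := by
  intro K
  cases K with
  | zero => simp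
  | succ K =>
    have h1 := sum_take_le a (K + 1) (b.getD K 0)
    have h2 := exists_m b K hb
    have h3 := h (b.getD K 0 + 1) (by omega)
    rw [map_shift, map_shift] at h3
    omega

lemma mem_cells_iff (A : SkewShape) (i j : ℕ) :
    (i, j) ∈ A.cells ↔ A.inner.colLen j ≤ i ∧ i < A.outer.colLen j := by
  simp only [SkewShape.cells, Finset.mem_sdiff, YoungDiagram.mem_cells,
    YoungDiagram.mem_iff_lt_colLen]
  omega

lemma colLen_eq_zero_of (μ : YoungDiagram) {c : ℕ} (h : μ.rowLen 0 ≤ c) : μ.colLen c = 0 := by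
  by_contra h0
  have hm : (0, c) ∈ μ := YoungDiagram.mem_iff_lt_colLen.mpr (by omega)
  rw [YoungDiagram.mem_iff_lt_rowLen] at hm
  omega

lemma ov_eq (A : SkewShape) {l : ℕ} (hl : 1 ≤ l) (j : ℕ) :
    A.transpose.overlap l j = A.outer.colLen (j + l - 1) - A.inner.colLen j := by
  have hN : A.transpose.numCols = A.outer.colLen 0 := by
    simp [SkewShape.numCols, SkewShape.transpose, YoungDiagram.rowLen_transpose]
  have hcell : ∀ (i c : ℕ), ((c, i) ∈ A.transpose.cells ↔ (i, c) ∈ A.cells) := by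
    intro i c
    simp [SkewShape.cells, SkewShape.transpose, YoungDiagram.mem_cells,
      YoungDiagram.mem_transpose]
  have hset : (Finset.range A.transpose.numCols).filter
        (fun i => ∀ t, t < l → (j + t, i) ∈ A.transpose.cells)
      = Finset.Ico (A.inner.colLen j) (A.outer.colLen (j + l - 1)) := by
    ext i
    simp only [Finset.mem_filter, Finset.mem_range, Finset.mem_Ico, hN]
    constructor
    · rintro ⟨hi, hP⟩
      have h0 := (hcell i (j + 0)).mp (hP 0 (by omega))
      have h1 := (hcell i (j + (l - 1))).mp (hP (l - 1) (by omega))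
      rw [mem_cells_iff] at h0 h1
      simp only [Nat.add_zero] at h0
      have e : j + (l - 1) = j + l - 1 := by omega
      rw [e] at h1
      exact ⟨by omega, h1.2⟩
    · rintro ⟨h1, h2⟩
      refine ⟨lt_of_lt_of_le h2 (A.outer.colLen_anti 0 _ (by omega)), ?_⟩
      intro t ht
      rw [hcell, mem_cells_iff]
      constructor
      · exact le_trans (A.inner.colLen_anti j (j + t) (by omega)) h1
      · exact lt_of_lt_of_le h2 (A.outer.colLen_anti (j + t) (j + l - 1) (by omega))
  rw [SkewShape.overlap, hset, Nat.card_Ico]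

lemma rect_col (A : SkewShape) {k l : ℕ} (hk : 1 ≤ k) (hl : 1 ≤ l) (j : ℕ) :
    ((Finset.range A.numRows).filter
        (fun r => ∀ t, t < k → ∀ u, u < l → (r + t, j + u) ∈ A.cells)).card
      = (A.outer.colLen (j + l - 1) - A.inner.colLen j) + 1 - k := by
  have hset : (Finset.range A.numRows).filter
        (fun r => ∀ t, t < k → ∀ u, u < l → (r + t, j + u) ∈ A.cells)
      = Finset.Ico (A.inner.colLen j) (A.outer.colLen (j + l - 1) + 1 - k) := by
    ext r
    simp only [Finset.mem_filter, Finset.mem_range, Finset.mem_Ico]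
    constructor
    · rintro ⟨hr, hP⟩
      have h0 := hP 0 (by omega) 0 (by omega)
      have h1 := hP (k - 1) (by omega) (l - 1) (by omega)
      rw [mem_cells_iff] at h0 h1
      simp only [Nat.add_zero] at h0
      have e : j + (l - 1) = j + l - 1 := by omega
      rw [e] at h1
      exact ⟨by omega, by omega⟩
    · rintro ⟨h1, h2⟩
      have hrN : r < A.numRows := by
        have := A.outer.colLen_anti 0 (j + l - 1) (by omega)
        simp only [SkewShape.numRows]
        omega
      refine ⟨hrN, ?_⟩
      intro t ht u hu
      rw [mem_cells_iff]
      constructor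
      · have := A.inner.colLen_anti j (j + u) (by omega)
        omega
      · have := A.outer.colLen_anti (j + u) (j + l - 1) (by omega)
        omega
  rw [hset, Nat.card_Ico]
  omega

lemma rects_eq_sum (A : SkewShape) {k l : ℕ} (hk : 1 ≤ k) (hl : 1 ≤ l) :
    A.rects k l = ∑ j ∈ Finset.range A.numCols,
      ((A.outer.colLen (j + l - 1) - A.inner.colLen j) + 1 - k) := by
  rw [SkewShape.rects, Finset.card_filter, Finset.sum_product_right]
  apply Finset.sum_congr rfl
  intro j _
  rw [← Finset.card_filter]
  exact rect_col A hk hl j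

lemma list_range_map_sum (n : ℕ) (g : ℕ → ℕ) :
    ((List.range n).map g).sum = ∑ j ∈ Finset.range n, g j := by
  induction n with
  | zero => simp
  | succ n ih =>
    rw [List.range_succ, Finset.sum_range_succ, List.map_append, List.sum_append, ih]
    simp

lemma sum_map_filter_pos (f : ℕ → ℕ) (hf : f 0 = 0) (x : List ℕ) :
    ((x.filter (fun m => 0 < m)).map f).sum = (x.map f).sum := by
  induction x with
  | nil => simp
  | cons a t ih =>
    by_cases h : 0 < a
    · simp [List.filter_cons, h, ih]
    · have ha : a = 0 := by omega
      subst ha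
      simp [List.filter_cons, hf, ih]

lemma colsK_map_sum (A : SkewShape) {k l : ℕ} (hk : 1 ≤ k) (hl : 1 ≤ l) :
    ((A.colsK l).map (fun x => x + 1 - k)).sum
      = ∑ j ∈ Finset.range A.numCols,
          ((A.outer.colLen (j + l - 1) - A.inner.colLen j) + 1 - k) := by
  rw [SkewShape.colsK, SkewShape.rowsK]
  rw [List.Perm.sum_eq ((sortDesc_perm _).map _)]
  rw [sum_map_filter_pos _ (by omega)]
  rw [List.map_map, list_range_map_sum]
  have hn : A.transpose.numRows = A.numCols := by
    simp [SkewShape.numRows, SkewShape.numCols, SkewShape.transpose,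
      YoungDiagram.colLen_transpose]
  rw [hn]
  have hterm : ∀ j, ((fun x => x + 1 - k) ∘ A.transpose.overlap l) j
      = (A.outer.colLen (j + l - 1) - A.inner.colLen j) + 1 - k := by
    intro j
    simp [Function.comp, ov_eq A hl j]
  calc ∑ j ∈ Finset.range (A.numCols + 1 - l), ((fun x => x + 1 - k) ∘ A.transpose.overlap l) j
      = ∑ j ∈ Finset.range (A.numCols + 1 - l),
          ((A.outer.colLen (j + l - 1) - A.inner.colLen j) + 1 - k) :=
        Finset.sum_congr rfl (fun j _ => hterm j)
    _ = ∑ j ∈ Finset.range A.numCols,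
          ((A.outer.colLen (j + l - 1) - A.inner.colLen j) + 1 - k) := by
        apply Finset.sum_subset (Finset.range_subset_range.mpr (by omega))
        intro j hj hj'
        simp only [Finset.mem_range] at hj hj'
        have hle : A.numCols ≤ j + l - 1 := by omega
        have h0 : A.outer.colLen (j + l - 1) = 0 := colLen_eq_zero_of _ hle
        omega

lemma rects_eq_colsK_sum (A : SkewShape) {k l : ℕ} (hk : 1 ≤ k) (hl : 1 ≤ l) :
    A.rects k l = ((A.colsK l).map (fun x => x + 1 - k)).sum := by
  rw [rects_eq_sum A hk hl, colsK_map_sum A hk hl]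

lemma colsK_sorted (A : SkewShape) (l : ℕ) : (A.colsK l).Pairwise (· ≥ ·) := by
  rw [SkewShape.colsK, SkewShape.rowsK]
  exact sortDesc_sorted _

end AuxProofs

/-- second part of Proposition `pro:3measures`.
Let `A` and `B` be skew shapes and fix `l ≥ 1`.  Then `cols_l(A) ⊴ cols_l(B)` in the
dominance order if and only if `rects_{k,l}(A) ≤ rects_{k,l}(B)` for all `k ≥ 1`. -/
theorem colsL_dom_iff_rects_le (A B : SkewShape) (l : ℕ) (hl : 1 ≤ l) :
    Dom (A.colsK l) (B.colsK l) ↔ ∀ k, 1 ≤ k → A.rects k l ≤ B.rects k l := by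
  constructor
  · intro hD k hk
    rw [rects_eq_colsK_sum A hk hl, rects_eq_colsK_sum B hk hl]
    exact dom_forward (colsK_sorted A l) hD hk
  · intro hR
    apply dom_backward (colsK_sorted B l)
    intro k hk
    rw [← rects_eq_colsK_sum A hk hl, ← rects_eq_colsK_sum B hk hl]
    exact hR k hk
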